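/- Under the hypotheses of the previous error-propagation lemma, with u C² on (0,1]² and u_h defined by the weighted-average filling recursion, one has max over D_h of |u − u_h| ≤ K·h with K = D·r², where D bounds the Hessian of u. Consequently for every p ∈ [1,∞], the discrete L^p norm ∥u − u_h∥_p (with ∥f∥_p := (Σ_{x∈D_h} |f(x)|^p h²)^{1/p}) satisfies ∥u − u_h∥_p ≤ K·h. -/

import Mathlib

lemma taylor2 (u : ℝ × ℝ → ℝ) (hu : ContDiff ℝ 2 u) (D : ℝ)
    (hHess : ∀ x : ℝ × ℝ, ‖iteratedFDeriv ℝ 2 u x‖ ≤ D) (x v : ℝ × ℝ) :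
    |u (x + v) - u x - fderiv ℝ u x v| ≤ D * ‖v‖ ^ 2 := by
  have hD : 0 ≤ D := le_trans (norm_nonneg _) (hHess x)
  have hd1 : ContDiff ℝ 1 (fderiv ℝ u) := hu.fderiv_right (by norm_num)
  have hdiff : Differentiable ℝ u := hu.differentiable (by norm_num)
  have key : ∀ a : ℝ × ℝ, ‖fderiv ℝ (fderiv ℝ u) a‖ ≤ D := by
    intro a
    refine ContinuousLinearMap.opNorm_le_bound _ hD fun m => ?_
    refine ContinuousLinearMap.opNorm_le_bound _ (by positivity) fun m' => ?_
    have h1 : fderiv ℝ (fderiv ℝ u) a m m' = iteratedFDeriv ℝ 2 u a ![m, m'] := by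
      rw [iteratedFDeriv_two_apply]; norm_num
    calc ‖fderiv ℝ (fderiv ℝ u) a m m'‖ = ‖iteratedFDeriv ℝ 2 u a ![m, m']‖ := by rw [h1]
      _ ≤ ‖iteratedFDeriv ℝ 2 u a‖ * ∏ i, ‖(![m, m']) i‖ :=
          (iteratedFDeriv ℝ 2 u a).le_opNorm _
      _ = ‖iteratedFDeriv ℝ 2 u a‖ * (‖m‖ * ‖m'‖) := by
          rw [Fin.prod_univ_two]; rfl
      _ ≤ D * (‖m‖ * ‖m'‖) :=
          mul_le_mul_of_nonneg_right (hHess a) (by positivity)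
      _ = D * ‖m‖ * ‖m'‖ := by ring
  have hLip : ∀ z : ℝ × ℝ, ‖fderiv ℝ u z - fderiv ℝ u x‖ ≤ D * ‖z - x‖ := by
    intro z
    have := convex_univ.norm_image_sub_le_of_norm_hasFDerivWithin_le
      (f := fderiv ℝ u) (f' := fun a => fderiv ℝ (fderiv ℝ u) a) (C := D)
      (fun a _ => ((hd1.differentiable one_ne_zero a).hasFDerivAt).hasFDerivWithinAt)
      (fun a _ => key a) (Set.mem_univ x) (Set.mem_univ z)
    simpa using this
  set F : ℝ × ℝ → ℝ := fun z => u z - fderiv ℝ u x z with hFdef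
  have hFderiv : ∀ z : ℝ × ℝ, HasFDerivAt F (fderiv ℝ u z - fderiv ℝ u x) z :=
    fun z => ((hdiff z).hasFDerivAt).sub ((fderiv ℝ u x).hasFDerivAt)
  have hmem : x + v ∈ Metric.closedBall x ‖v‖ := by
    simp [Metric.mem_closedBall, dist_eq_norm]
  have hmvt := (convex_closedBall x ‖v‖).norm_image_sub_le_of_norm_hasFDerivWithin_le
    (f := F) (f' := fun z => fderiv ℝ u z - fderiv ℝ u x) (C := D * ‖v‖)
    (fun z _ => (hFderiv z).hasFDerivWithinAt)
    (fun z hz => by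
      refine (hLip z).trans ?_
      have hz' : ‖z - x‖ ≤ ‖v‖ := by rwa [← dist_eq_norm, ← Metric.mem_closedBall]
      exact mul_le_mul_of_nonneg_left hz' hD)
    (Metric.mem_closedBall_self (norm_nonneg v)) hmem
  have h2 : F (x + v) - F x = u (x + v) - u x - fderiv ℝ u x v := by
    simp only [hFdef, map_add]; ring
  have h3 : ‖x + v - x‖ = ‖v‖ := by simp
  rw [← Real.norm_eq_abs, ← h2]
  calc ‖F (x + v) - F x‖ ≤ D * ‖v‖ * ‖x + v - x‖ := hmvt
    _ = D * ‖v‖ ^ 2 := by rw [h3]; ring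

/-- Smooth-boundary-data convergence: under the hypotheses of the
error-propagation lemma, `max_{D_h} |u - u_h| ≤ K h` with `K = D r²`, and
consequently for every `p ∈ [1,∞)` the discrete `L^p` norm
`(Σ_{x ∈ D_h} |u - u_h|^p h²)^{1/p}` is also bounded by `K h`
(the `p = ∞` case being the max bound). -/
theorem stmt_4 (N : ℕ) (hN : 1 ≤ N) (h : ℝ) (hh : h = 1 / N)
    (r : ℤ) (hr : 2 ≤ r)
    (A : Finset (ℝ × ℝ)) (hA : A.Nonempty)
    (hAnorm : ∀ y ∈ A, Real.sqrt (y.1 ^ 2 + y.2 ^ 2) ≤ (r : ℝ))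
    (hAlow : ∀ y ∈ A, y.2 ≤ -1)
    (w : ℝ × ℝ → ℝ) (hw : ∀ y ∈ A, 0 < w y)
    (u : ℝ × ℝ → ℝ) (hu : ContDiff ℝ 2 u)
    (D : ℝ) (hHess : ∀ x : ℝ × ℝ, ‖iteratedFDeriv ℝ 2 u x‖ ≤ D)
    (gstar : ℝ × ℝ) (hg : gstar = (∑ y ∈ A, w y)⁻¹ • ∑ y ∈ A, w y • y)
    (htransport : ∀ x : ℝ × ℝ, fderiv ℝ u x gstar = 0)
    (uh : ℝ × ℝ → ℝ)
    (hbdry : ∀ x : ℝ × ℝ, x.2 ≤ 0 → uh x = u x)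
    (hrec : ∀ x : ℝ × ℝ, 0 < x.2 →
      uh x = (∑ y ∈ A, w y)⁻¹ * ∑ y ∈ A, w y * uh (x + h • y)) :
    (∀ i j : ℕ, 1 ≤ i → i ≤ N → 1 ≤ j → j ≤ N →
      |uh ((i : ℝ) * h, (j : ℝ) * h) - u ((i : ℝ) * h, (j : ℝ) * h)| ≤
        D * (r : ℝ) ^ 2 * h) ∧
    (∀ p : ℝ, 1 ≤ p →
      (∑ q ∈ Finset.Icc 1 N ×ˢ Finset.Icc 1 N,
          |uh ((q.1 : ℝ) * h, (q.2 : ℝ) * h) -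
            u ((q.1 : ℝ) * h, (q.2 : ℝ) * h)| ^ p * h ^ 2) ^ (1 / p) ≤
        D * (r : ℝ) ^ 2 * h) := by
  have hN0 : (0:ℝ) < N := by exact_mod_cast hN
  have hh0 : 0 < h := by rw [hh]; positivity
  have hNh : (N:ℝ) * h = 1 := by rw [hh]; field_simp
  have hD : 0 ≤ D := le_trans (norm_nonneg _) (hHess 0)
  have hS0 : 0 < ∑ y ∈ A, w y := Finset.sum_pos hw hA
  have hr0 : (0:ℝ) < (r:ℝ) := by exact_mod_cast lt_of_lt_of_le (by norm_num) hr
  have hAn : ∀ y ∈ A, ‖y‖ ≤ (r : ℝ) := by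
    intro y hy
    have h1 : Real.sqrt (y.1 ^ 2) ≤ Real.sqrt (y.1 ^ 2 + y.2 ^ 2) :=
      Real.sqrt_le_sqrt (by nlinarith [sq_nonneg y.2])
    have h2 : Real.sqrt (y.2 ^ 2) ≤ Real.sqrt (y.1 ^ 2 + y.2 ^ 2) :=
      Real.sqrt_le_sqrt (by nlinarith [sq_nonneg y.1])
    rw [Prod.norm_def]
    refine max_le ?_ ?_
    · rw [Real.norm_eq_abs, ← Real.sqrt_sq_eq_abs]
      exact h1.trans (hAnorm y hy)
    · rw [Real.norm_eq_abs, ← Real.sqrt_sq_eq_abs]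
      exact h2.trans (hAnorm y hy)
  set K2 : ℝ := D * (r : ℝ) ^ 2 * h ^ 2 with hK2
  have hK20 : 0 ≤ K2 := by positivity
  have claim : ∀ j : ℕ, ∀ x : ℝ × ℝ, x.2 ≤ j * h → |uh x - u x| ≤ j * K2 := by
    intro j
    induction j with
    | zero =>
      intro x hx
      rw [Nat.cast_zero, zero_mul] at hx ⊢
      rw [hbdry x hx, sub_self, abs_zero]
    | succ j ih =>
      intro x hx
      rcases le_or_gt x.2 0 with hx0 | hx0
      · rw [hbdry x hx0, sub_self, abs_zero]; positivity
      · have hmem : ∀ y ∈ A, (x + h • y).2 ≤ j * h := by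
          intro y hy
          have hy2 : h * y.2 ≤ h * (-1) := mul_le_mul_of_nonneg_left (hAlow y hy) hh0.le
          have : (x + h • y).2 = x.2 + h * y.2 := rfl
          rw [this]
          push_cast at hx
          linarith
        have hzero : ∑ y ∈ A, w y * (fderiv ℝ u x) (h • y) = 0 := by
          have e2 := htransport x
          rw [hg, map_smul, map_sum] at e2
          simp only [map_smul, smul_eq_mul] at e2
          have e3 : ∑ y ∈ A, w y * (fderiv ℝ u x) y = 0 :=
            (mul_eq_zero.mp e2).resolve_left (inv_ne_zero hS0.ne')
          calc ∑ y ∈ A, w y * (fderiv ℝ u x) (h • y)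
              = h * ∑ y ∈ A, w y * (fderiv ℝ u x) y := by
                rw [Finset.mul_sum]
                refine Finset.sum_congr rfl fun y _ => ?_
                rw [map_smul, smul_eq_mul]; ring
            _ = 0 := by rw [e3, mul_zero]
        have hdecomp : uh x - u x = (∑ y ∈ A, w y)⁻¹ *
            ∑ y ∈ A, w y * (uh (x + h • y) - u x - (fderiv ℝ u x) (h • y)) := by
          have hsplit : ∑ y ∈ A, w y * (uh (x + h • y) - u x - (fderiv ℝ u x) (h • y))
              = (∑ y ∈ A, w y * uh (x + h • y)) - (∑ y ∈ A, w y) * u x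
                - ∑ y ∈ A, w y * (fderiv ℝ u x) (h • y) := by
            rw [Finset.sum_mul]
            rw [← Finset.sum_sub_distrib, ← Finset.sum_sub_distrib]
            refine Finset.sum_congr rfl fun y _ => ?_
            ring
          rw [hrec x hx0, hsplit, hzero, sub_zero, mul_sub,
            inv_mul_cancel_left₀ hS0.ne']
        have hterm : ∀ y ∈ A,
            |uh (x + h • y) - u x - (fderiv ℝ u x) (h • y)| ≤ (j + 1 : ℕ) * K2 := by
          intro y hy
          have h1 := ih (x + h • y) (hmem y hy)
          have h2 := taylor2 u hu D hHess x (h • y)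
          have h3 : ‖h • y‖ ≤ h * (r : ℝ) := by
            rw [norm_smul, Real.norm_eq_abs, abs_of_pos hh0]
            exact mul_le_mul_of_nonneg_left (hAn y hy) hh0.le
          have h4 : D * ‖h • y‖ ^ 2 ≤ K2 := by
            rw [hK2]
            nlinarith [norm_nonneg (h • y), mul_le_mul h3 h3 (norm_nonneg (h • y)) (by positivity)]
          have h5 : uh (x + h • y) - u x - (fderiv ℝ u x) (h • y)
              = (uh (x + h • y) - u (x + h • y))
                + (u (x + h • y) - u x - (fderiv ℝ u x) (h • y)) := by ring
          rw [h5]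
          refine (abs_add_le _ _).trans ?_
          push_cast
          linarith [h2.trans h4]
        rw [hdecomp, abs_mul, abs_inv, abs_of_pos hS0]
        have hsum : |∑ y ∈ A, w y * (uh (x + h • y) - u x - (fderiv ℝ u x) (h • y))|
            ≤ (∑ y ∈ A, w y) * ((j + 1 : ℕ) * K2) := by
          refine (Finset.abs_sum_le_sum_abs _ _).trans ?_
          rw [Finset.sum_mul]
          refine Finset.sum_le_sum fun y hy => ?_
          rw [abs_mul, abs_of_pos (hw y hy)]
          exact mul_le_mul_of_nonneg_left (hterm y hy) (hw y hy).le
        calc (∑ y ∈ A, w y)⁻¹ * |∑ y ∈ A, w y * (uh (x + h • y) - u x - (fderiv ℝ u x) (h • y))|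
            ≤ (∑ y ∈ A, w y)⁻¹ * ((∑ y ∈ A, w y) * ((j + 1 : ℕ) * K2)) :=
              mul_le_mul_of_nonneg_left hsum (inv_nonneg.2 hS0.le)
          _ = (j + 1 : ℕ) * K2 := inv_mul_cancel_left₀ hS0.ne' _
          _ = (↑(j + 1) : ℝ) * K2 := by push_cast; ring
  have part1 : ∀ i j : ℕ, 1 ≤ i → i ≤ N → 1 ≤ j → j ≤ N →
      |uh ((i : ℝ) * h, (j : ℝ) * h) - u ((i : ℝ) * h, (j : ℝ) * h)| ≤
        D * (r : ℝ) ^ 2 * h := by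
    intro i j hi1 hiN hj1 hjN
    have hx2 : (((i : ℝ) * h, (j : ℝ) * h) : ℝ × ℝ).2 ≤ N * h := by
      show (j : ℝ) * h ≤ N * h
      exact mul_le_mul_of_nonneg_right (by exact_mod_cast hjN) hh0.le
    refine (claim N _ hx2).trans ?_
    rw [hK2]
    have : (N : ℝ) * (D * (r : ℝ) ^ 2 * h ^ 2) = D * (r : ℝ) ^ 2 * h * ((N : ℝ) * h) := by
      ring
    rw [this, hNh, mul_one]
  refine ⟨part1, ?_⟩
  intro p hp
  set K : ℝ := D * (r : ℝ) ^ 2 * h with hK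
  have hK0 : 0 ≤ K := by positivity
  have hp0 : (0:ℝ) < p := lt_of_lt_of_le one_pos hp
  have hple : ∀ q ∈ Finset.Icc 1 N ×ˢ Finset.Icc 1 N,
      |uh ((q.1 : ℝ) * h, (q.2 : ℝ) * h) - u ((q.1 : ℝ) * h, (q.2 : ℝ) * h)| ^ p * h ^ 2
        ≤ K ^ p * h ^ 2 := by
    intro q hq
    rw [Finset.mem_product, Finset.mem_Icc, Finset.mem_Icc] at hq
    refine mul_le_mul_of_nonneg_right ?_ (by positivity)
    exact Real.rpow_le_rpow (abs_nonneg _)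
      (part1 q.1 q.2 hq.1.1 hq.1.2 hq.2.1 hq.2.2) hp0.le
  have hcard : (((Finset.Icc 1 N ×ˢ Finset.Icc 1 N).card : ℕ) : ℝ) = (N : ℝ) * (N : ℝ) := by
    rw [Finset.card_product, Nat.card_Icc]
    push_cast
    ring
  have hsum_le : (∑ q ∈ Finset.Icc 1 N ×ˢ Finset.Icc 1 N,
      |uh ((q.1 : ℝ) * h, (q.2 : ℝ) * h) - u ((q.1 : ℝ) * h, (q.2 : ℝ) * h)| ^ p * h ^ 2)
        ≤ K ^ p := by
    calc ∑ q ∈ Finset.Icc 1 N ×ˢ Finset.Icc 1 N,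
          |uh ((q.1 : ℝ) * h, (q.2 : ℝ) * h) - u ((q.1 : ℝ) * h, (q.2 : ℝ) * h)| ^ p * h ^ 2
        ≤ ∑ _q ∈ Finset.Icc 1 N ×ˢ Finset.Icc 1 N, K ^ p * h ^ 2 :=
          Finset.sum_le_sum hple
      _ = ((Finset.Icc 1 N ×ˢ Finset.Icc 1 N).card : ℝ) * (K ^ p * h ^ 2) := by
          rw [Finset.sum_const, nsmul_eq_mul]
      _ = K ^ p * (((N : ℝ) * h) * ((N : ℝ) * h)) := by rw [hcard]; ring
      _ = K ^ p := by rw [hNh]; ring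
  have hsum0 : (0:ℝ) ≤ ∑ q ∈ Finset.Icc 1 N ×ˢ Finset.Icc 1 N,
      |uh ((q.1 : ℝ) * h, (q.2 : ℝ) * h) - u ((q.1 : ℝ) * h, (q.2 : ℝ) * h)| ^ p * h ^ 2 :=
    Finset.sum_nonneg fun q _ => by positivity
  calc (∑ q ∈ Finset.Icc 1 N ×ˢ Finset.Icc 1 N,
        |uh ((q.1 : ℝ) * h, (q.2 : ℝ) * h) - u ((q.1 : ℝ) * h, (q.2 : ℝ) * h)| ^ p * h ^ 2) ^ (1 / p)
      ≤ (K ^ p) ^ (1 / p) := Real.rpow_le_rpow hsum0 hsum_le (by positivity)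
    _ = K := by
        rw [← Real.rpow_mul hK0, mul_one_div_cancel hp0.ne', Real.rpow_one]
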